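/- Let n ≥ 1, s < 0 and 0 < q, r ≤ ∞. There exist constants 0 < c ≤ C depending only on n, s, q, r such that for every measurable function f on ℝⁿ, c·‖f‖_{K̇^s_{q,r}} ≤ (∑_{j∈ℤ} [2^{js} ‖f·χ_{B(0,2^j)}‖_{L^q(ℝⁿ)}]^r)^{1/r} ≤ C·‖f‖_{K̇^s_{q,r}} (with the sum replaced by sup_{j∈ℤ} 2^{js} ‖f·χ_{B(0,2^j)}‖_{L^q} when r = ∞), where B(0,2^j) = {x ∈ ℝⁿ : |x| < 2^j}. -/

import Mathlib

open MeasureTheory Set ENNReal Filter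

noncomputable section

abbrev Euc (n : ℕ) : Type := EuclideanSpace ℝ (Fin n)

def annulus (n : ℕ) (j : ℤ) : Set (Euc n) :=
  {x : Euc n | (2 : ℝ) ^ (j - 1) ≤ ‖x‖ ∧ ‖x‖ < (2 : ℝ) ^ j}

def herzNorm (n : ℕ) (s : ℝ) (q r : ℝ≥0∞) (f : Euc n → ℝ) : ℝ≥0∞ :=
  if r = ⊤ then
    ⨆ j : ℤ, ENNReal.ofReal ((2 : ℝ) ^ ((j : ℝ) * s)) *
      eLpNorm ((annulus n j).indicator f) q volume
  else
    (∑' j : ℤ, (ENNReal.ofReal ((2 : ℝ) ^ ((j : ℝ) * s)) *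
      eLpNorm ((annulus n j).indicator f) q volume) ^ r.toReal) ^ (1 / r.toReal)

/-- The Herz quasi-norm in which the annuli `A_j` are replaced by the balls `B(0, 2^j)`. -/
def herzBallNorm (n : ℕ) (s : ℝ) (q r : ℝ≥0∞) (f : Euc n → ℝ) : ℝ≥0∞ :=
  if r = ⊤ then
    ⨆ j : ℤ, ENNReal.ofReal ((2 : ℝ) ^ ((j : ℝ) * s)) *
      eLpNorm (({x : Euc n | ‖x‖ < (2 : ℝ) ^ j}).indicator f) q volume
  else
    (∑' j : ℤ, (ENNReal.ofReal ((2 : ℝ) ^ ((j : ℝ) * s)) *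
      eLpNorm (({x : Euc n | ‖x‖ < (2 : ℝ) ^ j}).indicator f) q volume) ^ r.toReal) ^ (1 / r.toReal)


lemma my_tsum_holder {p q : ℝ} (hpq : p.HolderConjugate q) (f g : ℕ → ℝ≥0∞) :
    ∑' m, f m * g m ≤ (∑' m, f m ^ p) ^ (1/p) * (∑' m, g m ^ q) ^ (1/q) := by
  have := ENNReal.lintegral_mul_le_Lp_mul_Lq (Measure.count : Measure ℕ) hpq
    (f := f) (g := g) (measurable_from_top.aemeasurable) (measurable_from_top.aemeasurable)
  simpa [lintegral_count] using this

lemma my_sum_rpow_le {ι : Type*} (S : Finset ι) (f : ι → ℝ≥0∞) {p : ℝ} (h0 : 0 < p) (h1 : p ≤ 1) :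
    (∑ i ∈ S, f i) ^ p ≤ ∑ i ∈ S, f i ^ p := by
  classical
  induction S using Finset.cons_induction with
  | empty => simp [ENNReal.zero_rpow_of_pos h0]
  | cons a S ha ih =>
      rw [Finset.sum_cons, Finset.sum_cons]
      exact (ENNReal.rpow_add_le_add_rpow _ _ h0.le h1).trans (by gcongr)

lemma my_tsum_rpow_le {ι : Type*} (f : ι → ℝ≥0∞) {p : ℝ} (h0 : 0 < p) (h1 : p ≤ 1) :
    (∑' i, f i) ^ p ≤ ∑' i, f i ^ p := by
  rw [ENNReal.tsum_eq_iSup_sum]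
  have mono : Monotone (fun x : ℝ≥0∞ => x ^ p) := fun x y hxy => ENNReal.rpow_le_rpow hxy h0.le
  rw [mono.map_iSup_of_continuousAt (ENNReal.continuous_rpow_const.continuousAt)
    (by simp [ENNReal.zero_rpow_of_pos h0])]
  exact iSup_le fun S => (my_sum_rpow_le S f h0 h1).trans (ENNReal.sum_le_tsum S)

lemma my_pow_as_rpow (w : ℝ≥0∞) (t : ℝ) (ht : 0 ≤ t) (m : ℕ) :
    (w ^ m) ^ t = (w ^ t) ^ m := by
  rcases eq_or_ne w 0 with rfl | hw0
  · rcases eq_or_lt_of_le ht with rfl | ht'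
    · simp
    · rcases Nat.eq_zero_or_pos m with rfl | hm
      · simp
      · rw [zero_pow hm.ne', ENNReal.zero_rpow_of_pos ht', zero_pow hm.ne']
  rcases eq_or_ne w ⊤ with rfl | hwt
  · rcases eq_or_lt_of_le ht with rfl | ht'
    · simp
    · rcases Nat.eq_zero_or_pos m with rfl | hm
      · simp
      · rw [ENNReal.top_pow hm.ne', ENNReal.top_rpow_of_pos ht', ENNReal.top_pow hm.ne']
  rw [← ENNReal.rpow_natCast w m, ← ENNReal.rpow_natCast (w ^ t) m,
    ← ENNReal.rpow_mul, ← ENNReal.rpow_mul, mul_comm]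

/-- One-sided geometric-convolution bound, per index. -/
lemma my_conv_bound {w : ℝ≥0∞} (hw0 : 0 < w) (hw : w < 1) {Q R : ℝ} (hQ : 0 < Q) (hR : 0 < R) :
    ∃ v C1 : ℝ≥0∞, v < 1 ∧ C1 ≠ ⊤ ∧ ∀ a b : ℤ → ℝ≥0∞,
      (∀ j, b j ^ Q ≤ ∑' m : ℕ, w ^ m * a (j - m) ^ Q) →
      ∀ j, b j ^ R ≤ C1 * ∑' m : ℕ, v ^ m * a (j - m) ^ R := by
  have hw0' : w ≠ 0 := hw0.ne'
  have hwt : w ≠ ⊤ := hw.trans_le le_top |>.ne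
  rcases le_or_gt R Q with hRQ | hQR
  · refine ⟨w ^ (R / Q), 1, ENNReal.rpow_lt_one hw (by positivity), one_ne_top, ?_⟩
    intro a b hab j
    have h1 : b j ^ R = (b j ^ Q) ^ (R / Q) := by
      rw [← ENNReal.rpow_mul]; congr 1; field_simp
    rw [h1, one_mul]
    refine (ENNReal.rpow_le_rpow (hab j) (by positivity)).trans ?_
    refine (my_tsum_rpow_le _ (by positivity) (by rw [div_le_one hQ]; exact hRQ)).trans ?_
    refine le_of_eq (tsum_congr fun m => ?_)
    rw [ENNReal.mul_rpow_of_nonneg _ _ (by positivity), my_pow_as_rpow w _ (by positivity),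
      ← ENNReal.rpow_mul]
    congr 2
    field_simp
  · set p : ℝ := R / Q with hp
    have hp1 : 1 < p := (one_lt_div hQ).2 hQR
    have hpq : p.HolderConjugate (p / (p - 1)) := Real.HolderConjugate.conjExponent hp1
    set q' : ℝ := p / (p - 1) with hq'
    set α : ℝ≥0∞ := w ^ ((1:ℝ)/2) with hα
    have hα1 : α < 1 := ENNReal.rpow_lt_one hw (by norm_num)
    have hα0 : α ≠ 0 := (ENNReal.rpow_pos hw0 hwt).ne'
    set β : ℝ≥0∞ := α ^ q' with hβ
    have hβ1 : β < 1 := ENNReal.rpow_lt_one hα1 hpq.symm.pos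
    set v : ℝ≥0∞ := α ^ p with hv
    have hv1 : v < 1 := ENNReal.rpow_lt_one hα1 hpq.pos
    set G : ℝ≥0∞ := (1 - β)⁻¹ with hG
    have hGt : G ≠ ⊤ := by
      rw [hG, Ne, ENNReal.inv_eq_top, tsub_eq_zero_iff_le]
      exact fun h => absurd hβ1 (not_lt.2 h)
    refine ⟨v, G ^ (p / q'), hv1, ENNReal.rpow_ne_top_of_nonneg (div_nonneg hpq.nonneg hpq.symm.nonneg) hGt, ?_⟩
    intro a b hab j
    set S : ℝ≥0∞ := ∑' m : ℕ, v ^ m * a (j - m) ^ R with hS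
    have hαα : α * α = w := by
      rw [hα, ← ENNReal.rpow_add _ _ hw0' hwt]
      norm_num
    have hsplit : ∀ m : ℕ, w ^ m * a (j - m) ^ Q = α ^ m * (α ^ m * a (j - m) ^ Q) := by
      intro m
      rw [← mul_assoc, ← mul_pow, hαα]
    have key : ∑' m : ℕ, w ^ m * a (j - m) ^ Q ≤ G ^ (1 / q') * S ^ (1 / p) := by
      calc ∑' m : ℕ, w ^ m * a (j - m) ^ Q
          = ∑' m : ℕ, α ^ m * (α ^ m * a (j - m) ^ Q) := tsum_congr hsplit
        _ ≤ (∑' m : ℕ, (α ^ m) ^ q') ^ (1/q') *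
            (∑' m : ℕ, (α ^ m * a (j - m) ^ Q) ^ p) ^ (1/p) :=
            my_tsum_holder hpq.symm _ _
        _ = G ^ (1 / q') * S ^ (1 / p) := by
            congr 1
            · congr 1
              rw [show (∑' m : ℕ, (α ^ m) ^ q') = ∑' m : ℕ, β ^ m from
                tsum_congr fun m => my_pow_as_rpow α q' hpq.symm.nonneg m,
                ENNReal.tsum_geometric]
            · congr 1
              refine tsum_congr fun m => ?_
              rw [ENNReal.mul_rpow_of_nonneg _ _ hpq.nonneg,
                my_pow_as_rpow α p hpq.nonneg, ← hv,
                ← ENNReal.rpow_mul (a (j - m)) Q p,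
                show Q * p = R by rw [hp, mul_comm, div_mul_cancel₀ _ hQ.ne']]
    have h2 : b j ^ R = (b j ^ Q) ^ p := by
      rw [← ENNReal.rpow_mul]; congr 1; rw [hp]; field_simp
    rw [h2]
    calc (b j ^ Q) ^ p ≤ (G ^ (1 / q') * S ^ (1 / p)) ^ p :=
          ENNReal.rpow_le_rpow ((hab j).trans key) hpq.nonneg
      _ = G ^ (p / q') * S := by
          rw [ENNReal.mul_rpow_of_nonneg _ _ hpq.nonneg, ← ENNReal.rpow_mul,
            ← ENNReal.rpow_mul, one_div_mul_eq_div, one_div_mul_cancel hpq.ne_zero,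
            ENNReal.rpow_one]

lemma my_key_sum {w : ℝ≥0∞} (hw0 : 0 < w) (hw : w < 1) {Q R : ℝ} (hQ : 0 < Q) (hR : 0 < R) :
    ∃ K : ℝ≥0∞, K ≠ ⊤ ∧ ∀ a b : ℤ → ℝ≥0∞,
      (∀ j, b j ^ Q ≤ ∑' m : ℕ, w ^ m * a (j - m) ^ Q) →
      (∑' j : ℤ, b j ^ R) ^ (1/R) ≤ K * (∑' j : ℤ, a j ^ R) ^ (1/R) := by
  obtain ⟨v, C1, hv1, hC1, hbd⟩ := my_conv_bound hw0 hw hQ hR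
  have hvt : ((1 - v)⁻¹ : ℝ≥0∞) ≠ ⊤ := by
    rw [Ne, ENNReal.inv_eq_top, tsub_eq_zero_iff_le]
    exact fun h => absurd hv1 (not_lt.2 h)
  refine ⟨(C1 * (1 - v)⁻¹) ^ (1/R), ENNReal.rpow_ne_top_of_nonneg (by positivity)
    (ENNReal.mul_ne_top hC1 hvt), ?_⟩
  intro a b hab
  have h1 : ∑' j : ℤ, b j ^ R ≤ C1 * (1 - v)⁻¹ * ∑' j : ℤ, a j ^ R := by
    calc ∑' j : ℤ, b j ^ R
        ≤ ∑' j : ℤ, C1 * ∑' m : ℕ, v ^ m * a (j - m) ^ R :=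
          Summable.tsum_le_tsum (hbd a b hab) ENNReal.summable ENNReal.summable
      _ = C1 * ∑' m : ℕ, v ^ m * ∑' j : ℤ, a (j - m) ^ R := by
          rw [ENNReal.tsum_mul_left]
          congr 1
          rw [ENNReal.tsum_comm]
          exact tsum_congr fun m => by rw [ENNReal.tsum_mul_left]
      _ = C1 * ∑' m : ℕ, v ^ m * ∑' j : ℤ, a j ^ R := by
          congr 1
          refine tsum_congr fun m => ?_
          congr 1
          simpa using (Equiv.subRight (m : ℤ)).tsum_eq (fun j => a j ^ R)
      _ = C1 * ((1 - v)⁻¹ * ∑' j : ℤ, a j ^ R) := by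
          rw [ENNReal.tsum_mul_right, ENNReal.tsum_geometric]
      _ = C1 * (1 - v)⁻¹ * ∑' j : ℤ, a j ^ R := by rw [mul_assoc]
  calc (∑' j : ℤ, b j ^ R) ^ (1/R)
      ≤ (C1 * (1 - v)⁻¹ * ∑' j : ℤ, a j ^ R) ^ (1/R) :=
        ENNReal.rpow_le_rpow h1 (by positivity)
    _ = (C1 * (1 - v)⁻¹) ^ (1/R) * (∑' j : ℤ, a j ^ R) ^ (1/R) :=
        ENNReal.mul_rpow_of_nonneg _ _ (by positivity)

lemma my_key_sup {w : ℝ≥0∞} (hw : w < 1) {Q : ℝ} (hQ : 0 < Q) :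
    ∃ K : ℝ≥0∞, K ≠ ⊤ ∧ ∀ a b : ℤ → ℝ≥0∞,
      (∀ j, b j ^ Q ≤ ∑' m : ℕ, w ^ m * a (j - m) ^ Q) →
      (⨆ j : ℤ, b j) ≤ K * ⨆ j : ℤ, a j := by
  have hvt : ((1 - w)⁻¹ : ℝ≥0∞) ≠ ⊤ := by
    rw [Ne, ENNReal.inv_eq_top, tsub_eq_zero_iff_le]
    exact fun h => absurd hw (not_lt.2 h)
  refine ⟨((1 - w)⁻¹) ^ (1/Q), ENNReal.rpow_ne_top_of_nonneg (by positivity) hvt, ?_⟩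
  intro a b hab
  refine iSup_le fun j => ?_
  have h1 : b j ^ Q ≤ (1 - w)⁻¹ * (⨆ k : ℤ, a k) ^ Q := by
    refine (hab j).trans ?_
    calc ∑' m : ℕ, w ^ m * a (j - m) ^ Q
        ≤ ∑' m : ℕ, w ^ m * (⨆ k : ℤ, a k) ^ Q := by
          gcongr with m
          exact le_iSup a (j - m)
      _ = (1 - w)⁻¹ * (⨆ k : ℤ, a k) ^ Q := by
          rw [ENNReal.tsum_mul_right, ENNReal.tsum_geometric]
  have h2 : b j = (b j ^ Q) ^ (1/Q) := by
    rw [← ENNReal.rpow_mul, mul_one_div_cancel hQ.ne', ENNReal.rpow_one]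
  rw [h2]
  calc (b j ^ Q) ^ (1/Q) ≤ ((1 - w)⁻¹ * (⨆ k : ℤ, a k) ^ Q) ^ (1/Q) :=
        ENNReal.rpow_le_rpow h1 (by positivity)
    _ = ((1 - w)⁻¹) ^ (1/Q) * ⨆ k : ℤ, a k := by
        rw [ENNReal.mul_rpow_of_nonneg _ _ (by positivity), ← ENNReal.rpow_mul,
          mul_one_div_cancel hQ.ne', ENNReal.rpow_one]

def ballSet (n : ℕ) (j : ℤ) : Set (Euc n) := {x : Euc n | ‖x‖ < (2 : ℝ) ^ j}

lemma meas_annulus (n : ℕ) (j : ℤ) : MeasurableSet (annulus n j) :=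
  (measurableSet_le measurable_const measurable_norm).inter
    (measurableSet_lt measurable_norm measurable_const)

lemma meas_ballSet (n : ℕ) (j : ℤ) : MeasurableSet (ballSet n j) :=
  measurableSet_lt measurable_norm measurable_const

lemma annulus_subset_ball (n : ℕ) (j : ℤ) : annulus n j ⊆ ballSet n j := fun x hx => hx.2

lemma annulus_disjoint (n : ℕ) {i i' : ℤ} (h : i < i') :
    Disjoint (annulus n i) (annulus n i') := by
  rw [Set.disjoint_left]
  rintro x ⟨_, h2⟩ ⟨h3, _⟩
  have : (2:ℝ) ^ i ≤ 2 ^ (i' - 1) := zpow_le_zpow_right₀ one_le_two (by omega)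
  exact absurd (h2.trans_le (this.trans h3)) (lt_irrefl _)

lemma annulus_pairwise_disjoint (n : ℕ) (j : ℤ) :
    Pairwise (Function.onFun Disjoint fun m : ℕ => annulus n (j - m)) := by
  intro m m' hmm'
  rcases lt_or_gt_of_ne hmm' with h | h
  · exact (annulus_disjoint n (by omega : (j - m' : ℤ) < j - m)).symm
  · exact annulus_disjoint n (by omega : (j - m : ℤ) < j - m')

lemma ball_diff_zero (n : ℕ) (j : ℤ) :
    ballSet n j \ {0} = ⋃ m : ℕ, annulus n (j - m) := by
  ext x
  simp only [ballSet, annulus, mem_diff, mem_setOf_eq, mem_singleton_iff, mem_iUnion]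
  constructor
  · rintro ⟨hx, hx0⟩
    have hxpos : 0 < ‖x‖ := norm_pos_iff.mpr hx0
    obtain ⟨k, hk1, hk2⟩ := exists_mem_Ico_zpow hxpos one_lt_two
    have hkj : k + 1 ≤ j := by
      by_contra h
      push_neg at h
      have h2 : (2:ℝ) ^ j ≤ 2 ^ k := zpow_le_zpow_right₀ one_le_two (by omega)
      exact absurd hx (not_lt.2 (h2.trans hk1))
    refine ⟨(j - (k+1)).toNat, ?_, ?_⟩
    · have he : j - ((j - (k+1)).toNat : ℤ) - 1 = k := by omega
      rw [he]; exact hk1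
    · have he : j - ((j - (k+1)).toNat : ℤ) = k + 1 := by omega
      rw [he]; exact hk2
  · rintro ⟨m, h1, h2⟩
    refine ⟨h2.trans_le (zpow_le_zpow_right₀ one_le_two (by omega)), ?_⟩
    intro h0
    rw [h0, norm_zero] at h1
    exact absurd h1 (not_le.2 (zpow_pos two_pos _))

lemma volume_zero_singleton (n : ℕ) (hn : 1 ≤ n) :
    volume ({0} : Set (Euc n)) = 0 := by
  haveI : Nonempty (Fin n) := ⟨⟨0, hn⟩⟩
  haveI : Nontrivial (Euc n) := inferInstance
  exact measure_singleton 0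

lemma eLp_ball_decomp (n : ℕ) (hn : 1 ≤ n) {q : ℝ≥0∞} (hq0 : q ≠ 0) (hqt : q ≠ ⊤)
    (f : Euc n → ℝ) (j : ℤ) :
    eLpNorm ((ballSet n j).indicator f) q volume ^ q.toReal
      = ∑' m : ℕ, eLpNorm ((annulus n (j - m)).indicator f) q volume ^ q.toReal := by
  have hQ : 0 < q.toReal := ENNReal.toReal_pos hq0 hqt
  have key : ∀ S : Set (Euc n), MeasurableSet S →
      eLpNorm (S.indicator f) q volume ^ q.toReal
        = ∫⁻ x in S, (‖f x‖₊ : ℝ≥0∞) ^ q.toReal ∂volume := by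
    intro S hS
    rw [eLpNorm_indicator_eq_eLpNorm_restrict hS, eLpNorm_eq_lintegral_rpow_enorm_toReal hq0 hqt,
      ← ENNReal.rpow_mul, one_div, inv_mul_cancel₀ hQ.ne', ENNReal.rpow_one]
    rfl
  rw [key _ (meas_ballSet n j)]
  have hae : (ballSet n j \ {0} : Set (Euc n)) =ᵐ[volume] ballSet n j := by
    refine MeasureTheory.diff_ae_eq_self.mpr ?_
    exact measure_mono_null (Set.inter_subset_right) (volume_zero_singleton n hn)
  rw [← Measure.restrict_congr_set hae, ball_diff_zero,
    lintegral_iUnion (s := fun m : ℕ => annulus n (j - m)) (fun m => meas_annulus n (j - m)) (annulus_pairwise_disjoint n j)]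
  exact tsum_congr fun m => (key _ (meas_annulus n (j - m))).symm

lemma eLp_ball_top (n : ℕ) (hn : 1 ≤ n) (f : Euc n → ℝ) (j : ℤ) :
    eLpNorm ((ballSet n j).indicator f) ⊤ volume
      ≤ ∑' m : ℕ, eLpNorm ((annulus n (j - m)).indicator f) ⊤ volume := by
  rw [eLpNorm_exponent_top]
  refine essSup_le_of_ae_le _ ?_
  have hM : ∀ᵐ x ∂(volume : Measure (Euc n)), ∀ m : ℕ,
      (‖((annulus n (j - m)).indicator f) x‖₊ : ℝ≥0∞)
        ≤ eLpNormEssSup ((annulus n (j - m)).indicator f) volume :=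
    ae_all_iff.2 fun m => ae_le_eLpNormEssSup
  have h0 : ∀ᵐ x ∂(volume : Measure (Euc n)), x ≠ 0 := by
    rw [ae_iff]
    simpa [Set.setOf_eq_eq_singleton] using volume_zero_singleton n hn
  filter_upwards [hM, h0] with x hx hx0
  by_cases hxB : x ∈ ballSet n j
  · have hxU : x ∈ ⋃ m : ℕ, annulus n (j - m) := by
      rw [← ball_diff_zero]; exact ⟨hxB, hx0⟩
    obtain ⟨m, hm⟩ := mem_iUnion.mp hxU
    calc (‖(ballSet n j).indicator f x‖₊ : ℝ≥0∞)
        = (‖(annulus n (j - m)).indicator f x‖₊ : ℝ≥0∞) := by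
          rw [indicator_of_mem hxB, indicator_of_mem hm]
      _ ≤ eLpNormEssSup ((annulus n (j - m)).indicator f) volume := hx m
      _ = eLpNorm ((annulus n (j - m)).indicator f) ⊤ volume := eLpNorm_exponent_top.symm
      _ ≤ ∑' m' : ℕ, eLpNorm ((annulus n (j - m')).indicator f) ⊤ volume := ENNReal.le_tsum m
  · simp [indicator_of_notMem hxB]

def eW (x : ℝ) : ℝ≥0∞ := ENNReal.ofReal ((2:ℝ) ^ x)

lemma eW_pos (x : ℝ) : 0 < eW x := ENNReal.ofReal_pos.2 (Real.rpow_pos_of_pos two_pos x)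

lemma eW_ne_top (x : ℝ) : eW x ≠ ⊤ := ENNReal.ofReal_ne_top

lemma eW_mul (x y : ℝ) : eW x * eW y = eW (x + y) := by
  rw [eW, eW, eW, ← ENNReal.ofReal_mul (by positivity), ← Real.rpow_add two_pos]

lemma eW_rpow (x t : ℝ) : eW x ^ t = eW (x * t) := by
  rw [eW, eW, ENNReal.ofReal_rpow_of_pos (by positivity), ← Real.rpow_mul (by norm_num)]

lemma eW_pow (x : ℝ) (m : ℕ) : eW x ^ m = eW (x * m) := by
  rw [← ENNReal.rpow_natCast (eW x) m, eW_rpow]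

lemma eW_lt_one {x : ℝ} (hx : x < 0) : eW x < 1 := by
  rw [eW, ← ENNReal.ofReal_one]
  exact ENNReal.ofReal_lt_ofReal_iff_of_nonneg (by positivity) |>.2
    (Real.rpow_lt_one_of_one_lt_of_neg one_lt_two hx)

lemma key_hyp_fin (n : ℕ) (hn : 1 ≤ n) (s : ℝ) {q : ℝ≥0∞} (hq0 : q ≠ 0) (hqt : q ≠ ⊤)
    (f : Euc n → ℝ) (j : ℤ) :
    (eW ((j:ℝ) * s) * eLpNorm ((ballSet n j).indicator f) q volume) ^ q.toReal
      ≤ ∑' m : ℕ, eW (s * q.toReal) ^ m *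
        (eW (((j - m : ℤ) : ℝ) * s) * eLpNorm ((annulus n (j - m)).indicator f) q volume)
          ^ q.toReal := by
  have hQ : (0:ℝ) ≤ q.toReal := ENNReal.toReal_nonneg
  rw [ENNReal.mul_rpow_of_nonneg _ _ hQ, eW_rpow, eLp_ball_decomp n hn hq0 hqt f j,
    ← ENNReal.tsum_mul_left]
  refine le_of_eq (tsum_congr fun m => ?_)
  rw [ENNReal.mul_rpow_of_nonneg _ _ hQ, eW_rpow, eW_pow, ← mul_assoc, eW_mul]
  congr 2
  push_cast
  ring

lemma key_hyp_top (n : ℕ) (hn : 1 ≤ n) (s : ℝ) (f : Euc n → ℝ) (j : ℤ) :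
    (eW ((j:ℝ) * s) * eLpNorm ((ballSet n j).indicator f) ⊤ volume) ^ (1:ℝ)
      ≤ ∑' m : ℕ, eW (s * 1) ^ m *
        (eW (((j - m : ℤ) : ℝ) * s) * eLpNorm ((annulus n (j - m)).indicator f) ⊤ volume)
          ^ (1:ℝ) := by
  simp only [ENNReal.rpow_one, mul_one]
  calc eW ((j:ℝ) * s) * eLpNorm ((ballSet n j).indicator f) ⊤ volume
      ≤ eW ((j:ℝ) * s) * ∑' m : ℕ, eLpNorm ((annulus n (j - m)).indicator f) ⊤ volume := by
        gcongr
        exact eLp_ball_top n hn f j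
    _ = ∑' m : ℕ, eW ((j:ℝ) * s) * eLpNorm ((annulus n (j - m)).indicator f) ⊤ volume :=
        ENNReal.tsum_mul_left.symm
    _ = _ := by
        refine tsum_congr fun m => ?_
        rw [← mul_assoc, eW_pow, eW_mul]
        congr 3
        push_cast
        ring

lemma my_eLp_indicator_mono {n : ℕ} {A B : Set (Euc n)} (hAB : A ⊆ B) (f : Euc n → ℝ)
    (q : ℝ≥0∞) : eLpNorm (A.indicator f) q volume ≤ eLpNorm (B.indicator f) q volume := by
  refine eLpNorm_mono fun x => ?_
  by_cases hx : x ∈ A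
  · rw [indicator_of_mem hx, indicator_of_mem (hAB hx)]
  · rw [indicator_of_notMem hx, norm_zero]
    exact norm_nonneg _

/-- For `s < 0`, the Herz quasi-norm is equivalent to its variant defined with balls
`B(0, 2^j)` in place of the annuli `A_j`. -/
theorem herzNorm_equiv_herzBallNorm
    (n : ℕ) (hn : 1 ≤ n) (s : ℝ) (hs : s < 0) (q r : ℝ≥0∞) (hq : 0 < q) (hr : 0 < r) :
    ∃ c C : ℝ, 0 < c ∧ c ≤ C ∧
      ∀ f : Euc n → ℝ, Measurable f →
        ENNReal.ofReal c * herzNorm n s q r f ≤ herzBallNorm n s q r f ∧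
          herzBallNorm n s q r f ≤ ENNReal.ofReal C * herzNorm n s q r f := by
  classical
  set Q : ℝ := if q = ⊤ then 1 else q.toReal with hQdef
  have hQ : 0 < Q := by
    rw [hQdef]
    split
    · norm_num
    · exact ENNReal.toReal_pos hq.ne' (by assumption)
  have hsQ : s * Q < 0 := mul_neg_of_neg_of_pos hs hQ
  have hw1 : eW (s * Q) < 1 := eW_lt_one hsQ
  have hw0 : 0 < eW (s * Q) := eW_pos _
  have hyp : ∀ f : Euc n → ℝ, ∀ j : ℤ,
      (eW ((j:ℝ) * s) * eLpNorm ((ballSet n j).indicator f) q volume) ^ Q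
        ≤ ∑' m : ℕ, eW (s * Q) ^ m *
          (eW (((j - m : ℤ) : ℝ) * s) *
            eLpNorm ((annulus n (j - m)).indicator f) q volume) ^ Q := by
    intro f j
    by_cases hqt : q = ⊤
    · subst hqt
      rw [show Q = 1 by rw [hQdef, if_pos rfl]]
      exact key_hyp_top n hn s f j
    · rw [show Q = q.toReal by rw [hQdef, if_neg hqt]]
      exact key_hyp_fin n hn s hq.ne' hqt f j
  have amono : ∀ (f : Euc n → ℝ) (j : ℤ),
      eW ((j:ℝ) * s) * eLpNorm ((annulus n j).indicator f) q volume
        ≤ eW ((j:ℝ) * s) * eLpNorm ((ballSet n j).indicator f) q volume :=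
    fun f j => mul_le_mul_right (my_eLp_indicator_mono (annulus_subset_ball n j) f q) _
  by_cases hrt : r = ⊤
  · subst hrt
    obtain ⟨K, hKt, hK⟩ := my_key_sup hw1 hQ
    refine ⟨1, max K.toReal 1, one_pos, le_max_right _ _, fun f hf => ?_⟩
    have hKC : K ≤ ENNReal.ofReal (max K.toReal 1) :=
      (ENNReal.ofReal_toReal hKt).symm.le.trans
        (ENNReal.ofReal_le_ofReal (le_max_left _ _))
    constructor
    · rw [ENNReal.ofReal_one, one_mul, herzNorm, herzBallNorm, if_pos rfl, if_pos rfl]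
      exact iSup_mono fun j => amono f j
    · rw [herzNorm, herzBallNorm, if_pos rfl, if_pos rfl]
      refine le_trans ?_ (mul_le_mul_left hKC _)
      exact hK (fun j => eW ((j:ℝ) * s) * eLpNorm ((annulus n j).indicator f) q volume)
        (fun j => eW ((j:ℝ) * s) * eLpNorm ((ballSet n j).indicator f) q volume)
        (hyp f)
  · have hR : 0 < r.toReal := ENNReal.toReal_pos hr.ne' hrt
    obtain ⟨K, hKt, hK⟩ := my_key_sum hw0 hw1 hQ hR
    refine ⟨1, max K.toReal 1, one_pos, le_max_right _ _, fun f hf => ?_⟩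
    have hKC : K ≤ ENNReal.ofReal (max K.toReal 1) :=
      (ENNReal.ofReal_toReal hKt).symm.le.trans
        (ENNReal.ofReal_le_ofReal (le_max_left _ _))
    constructor
    · rw [ENNReal.ofReal_one, one_mul, herzNorm, herzBallNorm, if_neg hrt, if_neg hrt]
      refine ENNReal.rpow_le_rpow ?_ (by positivity)
      refine Summable.tsum_le_tsum (fun j => ?_) ENNReal.summable ENNReal.summable
      exact ENNReal.rpow_le_rpow (amono f j) ENNReal.toReal_nonneg
    · rw [herzNorm, herzBallNorm, if_neg hrt, if_neg hrt]
      refine le_trans ?_ (mul_le_mul_left hKC _)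
      exact hK (fun j => eW ((j:ℝ) * s) * eLpNorm ((annulus n j).indicator f) q volume)
        (fun j => eW ((j:ℝ) * s) * eLpNorm ((ballSet n j).indicator f) q volume)
        (hyp f)
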